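/- arXiv:1003.3262 — 2 statements merged into one kernel-verified Lean document; each statement's English description precedes it below -/
import Mathlib

section
/- If n ≥ 2 and p₁,…,p_r are integers with 0 < pᵢ < n, n divides p₁+⋯+p_r, and gcd(n,p₁,…,p_r)=1, then the quantity σ = (1/2)(2 + (r-2)n - Σᵢ gcd(n,pᵢ)) is a nonnegative integer (i.e., 2 + (r-2)n - Σᵢ gcd(n,pᵢ) is even and nonnegative when r ≥ 3). -/
/-- If `d` is a proper divisor of `n`, then `2*d ≤ n`. -/
lemma aux_two_mul_le {d n : ℕ} (h : d ∣ n) (h1 : 0 < d) (h2 : d < n) : 2 * d ≤ n := by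
  obtain ⟨k, rfl⟩ := h
  have hk : 2 ≤ k := by nlinarith
  nlinarith

/-- Sorted version of the key combinatorial lemma. -/
lemma aux_key_sorted (n d₁ d₂ d₃ : ℕ) (hn : 0 < n)
    (h₁ : d₁ ∣ n) (h₂ : d₂ ∣ n) (h₃ : d₃ ∣ n)
    (l₁ : 2 * d₁ ≤ n) (l₂ : 2 * d₂ ≤ n) (l₃ : 2 * d₃ ≤ n)
    (o21 : d₂ ≤ d₁) (o32 : d₃ ≤ d₂)
    (hg : ∀ k, k ∣ d₁ → k ∣ d₂ → k ∣ d₃ → k = 1) :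
    d₁ + d₂ + d₃ ≤ n + 2 := by
  obtain ⟨a₁, ha₁⟩ := h₁
  obtain ⟨a₂, ha₂⟩ := h₂
  obtain ⟨a₃, ha₃⟩ := h₃
  have hd₁ : 0 < d₁ := by
    rcases Nat.eq_zero_or_pos d₁ with h | h
    · subst h; simp at ha₁; omega
    · exact h
  have hd₂ : 0 < d₂ := by
    rcases Nat.eq_zero_or_pos d₂ with h | h
    · subst h; simp at ha₂; omega
    · exact h
  have hd₃ : 0 < d₃ := by
    rcases Nat.eq_zero_or_pos d₃ with h | h
    · subst h; simp at ha₃; omega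
    · exact h
  have ha₁2 : 2 ≤ a₁ := by nlinarith
  have ha₂2 : 2 ≤ a₂ := by nlinarith
  have ha₃2 : 2 ≤ a₃ := by nlinarith
  have o12 : a₁ ≤ a₂ := by nlinarith
  have o23 : a₂ ≤ a₃ := by nlinarith
  by_cases hA : a₂ * a₃ + a₁ * a₃ + a₁ * a₂ ≤ a₁ * a₂ * a₃
  · -- easy case: the sum is at most n
    have key : (d₁ + d₂ + d₃) * (a₁ * a₂ * a₃) ≤ n * (a₁ * a₂ * a₃) := by
      calc (d₁ + d₂ + d₃) * (a₁ * a₂ * a₃)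
          = (d₁ * a₁) * (a₂ * a₃) + (d₂ * a₂) * (a₁ * a₃) + (d₃ * a₃) * (a₁ * a₂) := by ring
        _ = n * (a₂ * a₃) + n * (a₁ * a₃) + n * (a₁ * a₂) := by rw [← ha₁, ← ha₂, ← ha₃]
        _ = n * (a₂ * a₃ + a₁ * a₃ + a₁ * a₂) := by ring
        _ ≤ n * (a₁ * a₂ * a₃) := Nat.mul_le_mul_left n hA
    have hpos : 0 < a₁ * a₂ * a₃ := by positivity
    have := Nat.le_of_mul_le_mul_right key hpos
    omega
  · push_neg at hA
    have ha1 : a₁ = 2 := by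
      by_contra h
      have h3 : 3 ≤ a₁ := by omega
      have e1 : 3 * (a₂ * a₃) ≤ a₁ * (a₂ * a₃) := Nat.mul_le_mul_right (a₂ * a₃) h3
      have e2 : a₁ * a₃ ≤ a₂ * a₃ := Nat.mul_le_mul_right a₃ o12
      have e3 : a₁ * a₂ ≤ a₂ * a₃ := Nat.mul_le_mul o12 o23
      rw [mul_assoc] at hA
      linarith
    subst ha1
    by_cases ha2 : a₂ = 2
    · -- d₁ = d₂ = n/2, d₃ divides 2
      subst ha2
      have hdd : d₂ = d₁ := by omega
      have hcop : Nat.Coprime d₃ d₁ := by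
        apply hg
        · exact Nat.gcd_dvd_right d₃ d₁
        · rw [hdd]; exact Nat.gcd_dvd_right d₃ d₁
        · exact Nat.gcd_dvd_left d₃ d₁
      have hd3 : d₃ ∣ 2 := by
        have hmem : d₃ ∣ d₁ * 2 := ha₁ ▸ Dvd.intro a₃ ha₃.symm
        exact hcop.dvd_of_dvd_mul_left hmem
      have : d₃ ≤ 2 := Nat.le_of_dvd (by norm_num) hd3
      omega
    · have ha2' : a₂ = 3 := by
        by_contra h
        have h4 : 4 ≤ a₂ := by omega
        have e1 : 4 * a₃ ≤ a₂ * a₃ := Nat.mul_le_mul_right a₃ h4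
        nlinarith [hA, e1, o23]
      subst ha2'
      have ha3 : a₃ ≤ 5 := by omega
      interval_cases a₃
      · -- (2,3,3) : n = 6m
        obtain ⟨m, hm⟩ : 6 ∣ n := by omega
        have hm1 : m = 1 := hg m ⟨3, by omega⟩ ⟨2, by omega⟩ ⟨2, by omega⟩
        omega
      · -- (2,3,4) : n = 12m
        obtain ⟨m, hm⟩ : 12 ∣ n := by omega
        have hm1 : m = 1 := hg m ⟨6, by omega⟩ ⟨4, by omega⟩ ⟨3, by omega⟩
        omega
      · -- (2,3,5) : n = 30m
        obtain ⟨m, hm⟩ : 30 ∣ n := by omega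
        have hm1 : m = 1 := hg m ⟨15, by omega⟩ ⟨10, by omega⟩ ⟨6, by omega⟩
        omega

/-- Key combinatorial lemma: three divisors of `n`, each at most `n/2`,
with total gcd 1, sum to at most `n + 2`. -/
lemma aux_key (n d₁ d₂ d₃ : ℕ) (hn : 0 < n)
    (h₁ : d₁ ∣ n) (h₂ : d₂ ∣ n) (h₃ : d₃ ∣ n)
    (l₁ : 2 * d₁ ≤ n) (l₂ : 2 * d₂ ≤ n) (l₃ : 2 * d₃ ≤ n)
    (hg : ∀ k, k ∣ d₁ → k ∣ d₂ → k ∣ d₃ → k = 1) :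
    d₁ + d₂ + d₃ ≤ n + 2 := by
  rcases le_total d₁ d₂ with h12 | h12 <;> rcases le_total d₁ d₃ with h13 | h13 <;>
    rcases le_total d₂ d₃ with h23 | h23
  · have := aux_key_sorted n d₃ d₂ d₁ hn h₃ h₂ h₁ l₃ l₂ l₁ h23 h12
      (fun k k3 k2 k1 => hg k k1 k2 k3); omega
  · have := aux_key_sorted n d₂ d₃ d₁ hn h₂ h₃ h₁ l₂ l₃ l₁ h23 h13
      (fun k k2 k3 k1 => hg k k1 k2 k3); omega
  · have := aux_key_sorted n d₂ d₁ d₃ hn h₂ h₁ h₃ l₂ l₁ l₃ h12 h13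
      (fun k k2 k1 k3 => hg k k1 k2 k3); omega
  · have := aux_key_sorted n d₂ d₁ d₃ hn h₂ h₁ h₃ l₂ l₁ l₃ h12 h13
      (fun k k2 k1 k3 => hg k k1 k2 k3); omega
  · have := aux_key_sorted n d₃ d₁ d₂ hn h₃ h₁ h₂ l₃ l₁ l₂ h13 h12
      (fun k k3 k1 k2 => hg k k1 k2 k3); omega
  · have := aux_key_sorted n d₃ d₁ d₂ hn h₃ h₁ h₂ l₃ l₁ l₂ h13 h12
      (fun k k3 k1 k2 => hg k k1 k2 k3); omega
  · have := aux_key_sorted n d₁ d₃ d₂ hn h₁ h₃ h₂ l₁ l₃ l₂ h13 h23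
      (fun k k1 k3 k2 => hg k k1 k2 k3); omega
  · have := aux_key_sorted n d₁ d₂ d₃ hn h₁ h₂ h₃ l₁ l₂ l₃ h12 h23
      (fun k k1 k2 k3 => hg k k1 k2 k3); omega

lemma aux_nat_odd_zmod2 {k : ℕ} (h : ¬ 2 ∣ k) : (k : ZMod 2) = 1 := by
  have hk : k % 2 = 1 := by omega
  calc (k : ZMod 2) = ((k % 2 : ℕ) : ZMod 2) := (ZMod.natCast_mod k 2).symm
    _ = 1 := by rw [hk]; norm_num

/-- The genus formula for a cyclic n-gonal curve yields a nonnegative integer: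
`2 + (r-2)n - Σ gcd(n,pᵢ)` is even, and nonnegative when `r ≥ 3`. -/
theorem cyclic_ngonal_genus_integral
    (n : ℤ) (r : ℕ) (p : Fin r → ℤ)
    (hn : 2 ≤ n)
    (hp : ∀ i, 0 < p i ∧ p i < n)
    (hdvd : n ∣ ∑ i, p i)
    (hgcd : Finset.univ.gcd (fun i => Int.gcd n (p i)) = 1) :
    Even (2 + ((r : ℤ) - 2) * n - ∑ i, (Int.gcd n (p i) : ℤ)) ∧
      (3 ≤ r → 0 ≤ 2 + ((r : ℤ) - 2) * n - ∑ i, (Int.gcd n (p i) : ℤ)) := by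
  have hdvd_n : ∀ i, (Int.gcd n (p i) : ℤ) ∣ n := fun i => Int.gcd_dvd_left n (p i)
  have hdvd_p : ∀ i, (Int.gcd n (p i) : ℤ) ∣ p i := fun i => Int.gcd_dvd_right n (p i)
  have hdle : ∀ i, (Int.gcd n (p i) : ℤ) ≤ p i := fun i =>
    Int.le_of_dvd (hp i).1 (hdvd_p i)
  have hdpos : ∀ i, 0 < Int.gcd n (p i) := by
    intro i
    rcases Nat.eq_zero_or_pos (Int.gcd n (p i)) with h | h
    · exfalso
      have := Int.gcd_eq_zero_iff.mp h
      omega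
    · exact h
  have h2d : ∀ i, 2 * (Int.gcd n (p i) : ℤ) ≤ n := by
    intro i
    have h1 : (Int.gcd n (p i) : ℤ) < n := lt_of_le_of_lt (hdle i) (hp i).2
    have h2 : Int.gcd n (p i) ∣ n.natAbs := Nat.gcd_dvd_left _ _
    have hcast : (n.natAbs : ℤ) = n := Int.natAbs_of_nonneg (by omega)
    have h3 : Int.gcd n (p i) < n.natAbs := by omega
    have := aux_two_mul_le h2 (hdpos i) h3
    omega
  constructor
  · -- evenness
    obtain ⟨c, hc⟩ : ((2 : ℕ) : ℤ) ∣ (2 + ((r : ℤ) - 2) * n - ∑ i, (Int.gcd n (p i) : ℤ)) := by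
      rw [← ZMod.intCast_zmod_eq_zero_iff_dvd]
      push_cast
      have h2z : (2 : ZMod 2) = 0 := by decide
      rcases Int.even_or_odd n with he | ho
      · -- n even
        have hn0 : ((n : ZMod 2)) = 0 := by
          rw [ZMod.intCast_zmod_eq_zero_iff_dvd]
          exact_mod_cast he.two_dvd
        have hterm : ∀ i ∈ Finset.univ, ((Int.gcd n (p i) : ℕ) : ZMod 2) = ((p i : ZMod 2)) := by
          intro i _
          rcases Int.even_or_odd (p i) with he' | ho'
          · have h1 : (2 : ℤ) ∣ (Int.gcd n (p i) : ℤ) := Int.dvd_coe_gcd he.two_dvd he'.two_dvd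
            have h2 : (2 : ℕ) ∣ Int.gcd n (p i) := by exact_mod_cast h1
            have e1 : ((Int.gcd n (p i) : ℕ) : ZMod 2) = 0 :=
              (ZMod.natCast_eq_zero_iff _ 2).mpr h2
            have e2 : ((p i : ZMod 2)) = 0 := by
              rw [ZMod.intCast_zmod_eq_zero_iff_dvd]
              exact_mod_cast he'.two_dvd
            rw [e1, e2]
          · have hodd : ¬ (2 : ℕ) ∣ Int.gcd n (p i) := by
              intro h
              have h1 : (2 : ℤ) ∣ (Int.gcd n (p i) : ℤ) := by exact_mod_cast h
              have h2 : (2 : ℤ) ∣ p i := h1.trans (hdvd_p i)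
              rcases ho' with ⟨m, hm⟩
              omega
            rw [aux_nat_odd_zmod2 hodd]
            obtain ⟨m, hm⟩ := ho'
            rw [hm]; push_cast; rw [h2z]; ring
        rw [Finset.sum_congr rfl hterm]
        have hsp : (∑ i, ((p i : ZMod 2))) = 0 := by
          have h0 : ((∑ i, p i : ℤ) : ZMod 2) = 0 := by
            rw [ZMod.intCast_zmod_eq_zero_iff_dvd]
            exact_mod_cast dvd_trans he.two_dvd hdvd
          rw [← h0, Int.cast_sum]
        rw [hsp, hn0, h2z]; ring
      · -- n odd
        have hn1 : ((n : ZMod 2)) = 1 := by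
          obtain ⟨m, hm⟩ := ho
          rw [hm]; push_cast; rw [h2z]; ring
        have hterm : ∀ i ∈ Finset.univ, ((Int.gcd n (p i) : ℕ) : ZMod 2) = 1 := by
          intro i _
          apply aux_nat_odd_zmod2
          intro h
          have h1 : (2 : ℤ) ∣ (Int.gcd n (p i) : ℤ) := by exact_mod_cast h
          have h2 : (2 : ℤ) ∣ n := h1.trans (hdvd_n i)
          rcases ho with ⟨m, hm⟩
          omega
        rw [Finset.sum_congr rfl hterm, Finset.sum_const, hn1]
        simp only [Finset.card_univ, Fintype.card_fin, nsmul_eq_mul, mul_one]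
        ring
    refine ⟨c, ?_⟩
    push_cast at hc
    omega
  · -- nonnegativity
    intro hr
    rcases eq_or_lt_of_le hr with hr3 | hr4
    · -- r = 3
      subst hr3
      rw [Fin.sum_univ_three]
      have hcast : (n.natAbs : ℤ) = n := Int.natAbs_of_nonneg (by omega)
      have hsum := aux_key n.natAbs (Int.gcd n (p 0)) (Int.gcd n (p 1)) (Int.gcd n (p 2))
        (by omega)
        (Nat.gcd_dvd_left _ _) (Nat.gcd_dvd_left _ _) (Nat.gcd_dvd_left _ _)
        (by have := h2d 0; omega) (by have := h2d 1; omega) (by have := h2d 2; omega)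
        (by
          intro k k1 k2 k3
          have hk : k ∣ Finset.univ.gcd (fun i => Int.gcd n (p i)) := by
            apply Finset.dvd_gcd
            intro i _
            fin_cases i <;> assumption
          rw [hgcd] at hk
          exact Nat.dvd_one.mp hk)
      push_cast at hsum ⊢
      omega
    · -- r ≥ 4
      have hsum : (2 : ℤ) * (∑ i, (Int.gcd n (p i) : ℤ)) ≤ (r : ℤ) * n := by
        calc (2 : ℤ) * (∑ i, (Int.gcd n (p i) : ℤ)) = ∑ i, 2 * (Int.gcd n (p i) : ℤ) := by
              rw [Finset.mul_sum]
          _ ≤ ∑ _i : Fin r, n := Finset.sum_le_sum (fun i _ => h2d i)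
          _ = (r : ℤ) * n := by
              simp [Finset.sum_const, Finset.card_univ, nsmul_eq_mul]
      have hr4' : (4 : ℤ) ≤ (r : ℤ) := by exact_mod_cast hr4
      nlinarith [hsum, hn]
end

section
/- Let N = C₂ ⋉ (C_k × C_k) with the generator y of C₂ acting by (z₁,z₂) ↦ (z₁,z₂⁻¹), and let e ≥ 1 be coprime to 2k; set G = C_e × N. Let x generate C_e and z₁, z₂ generate the two C_k factors. Then (y, y·x·z₁·z₂, (x·z₁·z₂)⁻¹) is a generating vector: the product of the three elements is the identity, y has order 2, y·x·z₁·z₂ has order 2ek (when e,k odd coprime), and the three elements generate G. -/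
/-- If `g ^ n ∈ H` with `n` coprime to the (positive) order of `g`, then `g ∈ H`. -/
lemma mem_of_pow_mem_of_coprime {G : Type*} [Group G] (H : Subgroup G) (g : G) (n : ℕ)
    (hpos : 0 < orderOf g) (hco : Nat.Coprime n (orderOf g)) (hg : g ^ n ∈ H) : g ∈ H := by
  rcases Nat.lt_or_ge (orderOf g) 2 with h1 | h2
  · have : orderOf g = 1 := by omega
    have : g = 1 := orderOf_eq_one_iff.mp this
    simpa [this] using H.one_mem
  · obtain ⟨m, -, hm⟩ := Nat.exists_mul_mod_eq_one_of_coprime hco h2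
    have : g = (g ^ n) ^ m := by
      rw [← pow_mul, ← pow_mod_orderOf, hm, pow_one]
    rw [this]
    exact pow_mem hg m

/-- In `G ≅ C_e × (C₂ ⋉ (C_k × C_k))` (with the involution inverting the second
`C_k` factor), for `e, k` odd and coprime, the triple
`(y, y·x·z₁·z₂, (x·z₁·z₂)⁻¹)` is a generating `(2, 2ek, ek)`-vector. -/
theorem fermat_type_generating_vector {G : Type*} [Group G]
    (e k : ℕ) (he : Odd e) (hk : Odd k) (hek : Nat.Coprime e k)
    (he1 : 1 ≤ e) (hk1 : 2 ≤ k)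
    (x y z₁ z₂ : G)
    (hx : orderOf x = e) (hy : orderOf y = 2)
    (hz₁ : orderOf z₁ = k) (hz₂ : orderOf z₂ = k)
    (hxc : ∀ g : G, x * g = g * x)
    (hz : z₁ * z₂ = z₂ * z₁)
    (hyz₁ : y * z₁ = z₁ * y)
    (hyz₂ : y * z₂ * y⁻¹ = z₂⁻¹)
    (hgen : Subgroup.closure {x, y, z₁, z₂} = (⊤ : Subgroup G))
    (hcard : Nat.card G = 2 * e * k ^ 2) :
    y * (y * x * z₁ * z₂) * (x * z₁ * z₂)⁻¹ = 1 ∧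
      orderOf (y * x * z₁ * z₂) = 2 * e * k ∧
      Subgroup.closure {y, y * x * z₁ * z₂, (x * z₁ * z₂)⁻¹} = (⊤ : Subgroup G) := by
  have hy2 : y * y = 1 := by
    have := pow_orderOf_eq_one y
    rwa [hy, pow_two] at this
  have hyinv : y⁻¹ = y := inv_eq_of_mul_eq_one_right hy2
  -- basic commutation facts
  have cxz₁ : Commute x z₁ := hxc z₁
  have cxz₂ : Commute x z₂ := hxc z₂
  have cxy : Commute x y := hxc y
  have cz : Commute z₁ z₂ := hz
  have cyz₁ : Commute y z₁ := hyz₁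
  -- conjugation by y
  have h1 : y * x * y⁻¹ = x := by rw [cxy.symm.eq, mul_assoc, mul_inv_cancel, mul_one]
  have h2 : y * z₁ * y⁻¹ = z₁ := by rw [cyz₁.eq, mul_assoc, mul_inv_cancel, mul_one]
  have hconj : y * (x * z₁ * z₂) * y⁻¹ = x * z₁ * z₂⁻¹ := by
    calc y * (x * z₁ * z₂) * y⁻¹
        = (y * x * y⁻¹) * (y * z₁ * y⁻¹) * (y * z₂ * y⁻¹) := by group
      _ = x * z₁ * z₂⁻¹ := by rw [h1, h2, hyz₂]
  set a : G := x * z₁ * z₂ with ha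
  set w : G := y * x * z₁ * z₂ with hw
  have hwa : w = y * a := by rw [hw, ha]; group
  -- square of w
  have hw2 : w ^ 2 = x ^ 2 * z₁ ^ 2 := by
    have step : w ^ 2 = (y * a * y⁻¹) * a := by
      rw [pow_two, hwa, hyinv]
      simp [mul_assoc, hy2]
    rw [step, hconj, ha]
    have c1 : Commute (x * z₁) z₂⁻¹ := (cxz₂.mul_left cz).inv_right
    calc (x * z₁ * z₂⁻¹) * (x * z₁ * z₂) = (x * z₁) * (z₂⁻¹ * (x * z₁)) * z₂ := by group
      _ = (x * z₁) * ((x * z₁) * z₂⁻¹) * z₂ := by rw [c1.symm.eq]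
      _ = (x * z₁) * (x * z₁) * (z₂⁻¹ * z₂) := by group
      _ = (x * z₁) ^ 2 := by rw [inv_mul_cancel, mul_one, ← pow_two]
      _ = x ^ 2 * z₁ ^ 2 := cxz₁.mul_pow 2
  have hepos : 0 < e := he1
  have hkpos : 0 < k := by omega
  -- order of w² is e * k
  have hx2 : orderOf (x ^ 2) = e := by
    have : (orderOf x).Coprime 2 := by
      rw [hx]; exact Nat.coprime_two_right.mpr he
    rw [this.orderOf_pow, hx]
  have hz₁2 : orderOf (z₁ ^ 2) = k := by
    have : (orderOf z₁).Coprime 2 := by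
      rw [hz₁]; exact Nat.coprime_two_right.mpr hk
    rw [this.orderOf_pow, hz₁]
  have hordw2 : orderOf (w ^ 2) = e * k := by
    rw [hw2]
    have hc : Commute (x ^ 2) (z₁ ^ 2) := (cxz₁.pow_pow 2 2)
    rw [Commute.orderOf_mul_eq_mul_orderOf_of_coprime hc (by rw [hx2, hz₁2]; exact hek)]
    rw [hx2, hz₁2]
  -- w^(e*k) ≠ 1
  have hek_odd : Odd (e * k) := he.mul hk
  have hwek : w ^ (e * k) ≠ 1 := by
    intro hcontra
    obtain ⟨j, hj⟩ := hek_odd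
    have hval : w ^ (e * k) = (x ^ 2 * z₁ ^ 2) ^ j * w := by
      rw [hj, pow_add, pow_mul, hw2, pow_one]
    rw [hval] at hcontra
    -- then y is a product of elements commuting with z₂
    have hyv : y = ((x ^ 2 * z₁ ^ 2) ^ j)⁻¹ * a⁻¹ := by
      have : (x ^ 2 * z₁ ^ 2) ^ j * (y * a) = 1 := by rw [← hwa]; exact hcontra
      have h' : ((x ^ 2 * z₁ ^ 2) ^ j)⁻¹ = y * a := inv_eq_of_mul_eq_one_right this
      rw [h']; group
    have hcy : Commute y z₂ := by
      rw [hyv, ha]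
      have c2 : Commute (x * z₁ * z₂) z₂ := (cxz₂.mul_left cz).mul_left (Commute.refl z₂).symm
      have c3 : Commute (x ^ 2 * z₁ ^ 2) z₂ := (cxz₂.pow_left 2).mul_left ((cz.pow_left 2))
      exact ((c3.pow_left j).inv_left).mul_left (c2.inv_left) |>.symm |>.symm
    have : z₂ = z₂⁻¹ := by
      rw [← hyz₂, hcy.eq, mul_assoc, mul_inv_cancel, mul_one]
    have hz2sq : z₂ * z₂ = 1 := by nth_rewrite 2 [this]; exact mul_inv_cancel z₂
    have : orderOf z₂ ∣ 2 := orderOf_dvd_of_pow_eq_one (by rw [pow_two]; exact hz2sq)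
    rw [hz₂] at this
    have hk2 : k = 2 := by
      have := Nat.le_of_dvd (by norm_num) this
      omega
    rw [hk2] at hk
    exact (by norm_num : ¬ Odd 2) hk
  -- order of w
  have hpow1 : w ^ (2 * (e * k)) = 1 := by
    rw [pow_mul, hw2]
    have hxo : (x ^ 2) ^ (e * k) = 1 :=
      orderOf_dvd_iff_pow_eq_one.mp (hx2 ▸ Dvd.intro k rfl)
    have hzo : (z₁ ^ 2) ^ (e * k) = 1 :=
      orderOf_dvd_iff_pow_eq_one.mp (hz₁2 ▸ Dvd.intro_left e rfl)
    rw [(cxz₁.pow_pow 2 2).mul_pow, hxo, hzo, one_mul]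
  have hwdvd : orderOf w ∣ 2 * (e * k) := orderOf_dvd_of_pow_eq_one hpow1
  have hwfin : IsOfFinOrder w :=
    isOfFinOrder_iff_pow_eq_one.mpr ⟨2 * (e * k), by positivity, hpow1⟩
  have hword : orderOf w = 2 * e * k := by
    have hpow := hwfin.orderOf_pow w 2
    rw [hordw2] at hpow
    rcases Nat.even_or_odd (orderOf w) with heven | hodd
    · obtain ⟨m, hm⟩ := heven
      have hg : Nat.gcd (orderOf w) 2 = 2 := Nat.gcd_eq_right (by omega)
      rw [hg] at hpow
      have h2ek : orderOf w = 2 * (e * k) := by omega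
      rw [h2ek]; ring
    · have hg : Nat.gcd (orderOf w) 2 = 1 := by
        rw [Nat.gcd_comm]
        exact Nat.coprime_two_left.mpr hodd
      rw [hg, Nat.div_one] at hpow
      exact absurd (hpow ▸ pow_orderOf_eq_one w) hwek
  refine ⟨?_, hword, ?_⟩
  · rw [show y * (y * x * z₁ * z₂) = (y * y) * (x * z₁ * z₂) by group, hy2, one_mul,
      mul_inv_cancel]
  · -- generation
    set H := Subgroup.closure {y, y * x * z₁ * z₂, (x * z₁ * z₂)⁻¹} with hH
    have hyH : y ∈ H := Subgroup.subset_closure (by simp)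
    have haH : a ∈ H := by
      have : (x * z₁ * z₂)⁻¹ ∈ H := Subgroup.subset_closure (by simp)
      have := H.inv_mem this
      rwa [inv_inv, ← ha] at this
    -- a^k = x^k
    have hapow : ∀ n : ℕ, a ^ n = x ^ n * z₁ ^ n * z₂ ^ n := by
      intro n
      rw [ha]
      have c1 : Commute (x * z₁) z₂ := cxz₂.mul_left cz
      rw [c1.mul_pow, cxz₁.mul_pow]
    have haK : a ^ k = x ^ k := by
      rw [hapow, show z₁ ^ k = 1 by rw [← hz₁]; exact pow_orderOf_eq_one z₁,
        show z₂ ^ k = 1 by rw [← hz₂]; exact pow_orderOf_eq_one z₂, mul_one, mul_one]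
    have hxH : x ∈ H := by
      apply mem_of_pow_mem_of_coprime H x k (by rw [hx]; exact hepos)
        (by rw [hx]; exact hek.symm)
      rw [← haK]; exact pow_mem haH k
    have hz12H : z₁ * z₂ ∈ H := by
      have : x⁻¹ * a ∈ H := H.mul_mem (H.inv_mem hxH) haH
      rwa [ha, show x⁻¹ * (x * z₁ * z₂) = z₁ * z₂ by group] at this
    have hz12'H : z₁ * z₂⁻¹ ∈ H := by
      have hm : y * (z₁ * z₂) * y⁻¹ ∈ H := by
        rw [hyinv]; exact H.mul_mem (H.mul_mem hyH hz12H) hyH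
      have : y * (z₁ * z₂) * y⁻¹ = z₁ * z₂⁻¹ := by
        calc y * (z₁ * z₂) * y⁻¹ = (y * z₁ * y⁻¹) * (y * z₂ * y⁻¹) := by group
          _ = z₁ * z₂⁻¹ := by rw [hyz₂, h2]
      rwa [this] at hm
    have hz₁sqH : z₁ ^ 2 ∈ H := by
      have : (z₁ * z₂) * (z₁ * z₂⁻¹) ∈ H := H.mul_mem hz12H hz12'H
      rwa [show (z₁ * z₂) * (z₁ * z₂⁻¹) = z₁ * (z₂ * z₁) * z₂⁻¹ by group, ← cz.eq,
        show z₁ * (z₁ * z₂) * z₂⁻¹ = z₁ * z₁ by group, ← pow_two] at this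
    have hz₁H : z₁ ∈ H := by
      apply mem_of_pow_mem_of_coprime H z₁ 2 (by rw [hz₁]; exact hkpos)
        (by rw [hz₁]; exact (Nat.coprime_two_left.mpr hk))
      exact hz₁sqH
    have hz₂H : z₂ ∈ H := by
      have : z₁⁻¹ * (z₁ * z₂) ∈ H := H.mul_mem (H.inv_mem hz₁H) hz12H
      rwa [show z₁⁻¹ * (z₁ * z₂) = z₂ by group] at this
    rw [eq_top_iff, ← hgen, Subgroup.closure_le]
    intro g hg
    simp only [Set.mem_insert_iff, Set.mem_singleton_iff] at hg
    rcases hg with rfl | rfl | rfl | rfl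
    · exact hxH
    · exact hyH
    · exact hz₁H
    · exact hz₂H
end
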